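/- Let p be a prime which is a non-zero-divisor in the commutative ring B, let δ be a p-derivation on B with associated Frobenius lift φ, let n ≥ 1, and let t_0, t_1, …, t_n ∈ B satisfy φ^j(t_0) = Σ_{i=0}^{j} p^i · t_i^{p^{j−i}} for every 0 ≤ j ≤ n. Then for every 1 ≤ m ≤ n there exist centered polynomials F, G ∈ ℤ[X_0, …, X_{m−1}] such that t_m − δ^m(t_0) = F(t_0, t_1, …, t_{m−1}) and t_m − δ^m(t_0) = G(t_0, δ(t_0), …, δ^{m−1}(t_0)). -/

import Mathlib

open MvPolynomial

/-- A `p`-derivation on a commutative ring `B`, relative to the polynomial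
`Cp ∈ ℤ[X,Y]` satisfying `p·Cp = X^p + Y^p - (X+Y)^p`. -/
def IsPDeriv (p : ℕ) {B : Type*} [CommRing B] (Cp : MvPolynomial (Fin 2) ℤ)
    (δ : B → B) : Prop :=
  δ 1 = 0 ∧
  (∀ x y : B, δ (x + y) = δ x + δ y + MvPolynomial.aeval ![x, y] Cp) ∧
  (∀ x y : B, δ (x * y) = x ^ p * δ y + y ^ p * δ x + (p : B) * δ x * δ y)

/-- A polynomial is centered if it vanishes when all variables are set to `0`. -/
def Centered {R : Type*} [CommRing R] {σ : Type*} (F : MvPolynomial σ R) : Prop :=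
  MvPolynomial.eval (fun _ => (0 : R)) F = 0

section Aux

variable {B : Type*} [CommRing B]

/-- `x` is a centered integer polynomial expression in `b 0, …, b (k-1)`. -/
def CSpan (b : ℕ → B) (k : ℕ) (x : B) : Prop :=
  ∃ F : MvPolynomial (Fin k) ℤ, Centered F ∧
    x = MvPolynomial.aeval (fun i : Fin k => b (i : ℕ)) F

lemma eval_bind₁' {R : Type*} [CommSemiring R] {σ τ : Type*} (f : τ → R)
    (g : σ → MvPolynomial τ R) (φ : MvPolynomial σ R) :
    eval f (bind₁ g φ) = eval (fun i => eval f (g i)) φ :=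
  eval₂Hom_bind₁ _ _ _ _

lemma cspan_zero (b : ℕ → B) (k : ℕ) : CSpan b k 0 :=
  ⟨0, by simp [Centered], by simp⟩

lemma cspan_var (b : ℕ → B) {k j : ℕ} (h : j < k) : CSpan b k (b j) :=
  ⟨X ⟨j, h⟩, by simp [Centered], by simp⟩

lemma cspan_mono (b : ℕ → B) {k k' : ℕ} (h : k ≤ k') {x : B} :
    CSpan b k x → CSpan b k' x := by
  rintro ⟨F, hF, rfl⟩
  refine ⟨rename (Fin.castLE h) F, ?_, ?_⟩
  · unfold Centered at hF ⊢
    rw [eval_rename]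
    exact hF
  · rw [aeval_rename]
    congr 1

lemma cspan_comp (b : ℕ → B) {k l : ℕ} (F : MvPolynomial (Fin l) ℤ) (hF : Centered F)
    (c : Fin l → B) (hc : ∀ j, CSpan b k (c j)) :
    CSpan b k (MvPolynomial.aeval c F) := by
  choose G hG hGe using hc
  refine ⟨bind₁ G F, ?_, ?_⟩
  · unfold Centered at hF hG ⊢
    rw [eval_bind₁', show (fun i => eval (fun _ => (0:ℤ)) (G i)) = fun _ => (0:ℤ) from
      funext fun i => hG i]
    exact hF
  · rw [aeval_bind₁,
      show (fun i => aeval (fun j : Fin k => b (j : ℕ)) (G i)) = c from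
        funext fun i => (hGe i).symm]

lemma cspan_add {b : ℕ → B} {k : ℕ} {x y : B} (hx : CSpan b k x) (hy : CSpan b k y) :
    CSpan b k (x + y) := by
  have h := cspan_comp b (X 0 + X 1 : MvPolynomial (Fin 2) ℤ)
    (by simp [Centered]) ![x, y] (by
      intro j
      fin_cases j
      · simpa using hx
      · simpa using hy)
  simpa using h

lemma cspan_neg {b : ℕ → B} {k : ℕ} {x : B} (hx : CSpan b k x) : CSpan b k (-x) := by
  have h := cspan_comp b (-X 0 : MvPolynomial (Fin 1) ℤ)
    (by simp [Centered]) ![x] (by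
      intro j
      fin_cases j
      simpa using hx)
  simpa using h

lemma cspan_sub {b : ℕ → B} {k : ℕ} {x y : B} (hx : CSpan b k x) (hy : CSpan b k y) :
    CSpan b k (x - y) := by
  rw [sub_eq_add_neg]
  exact cspan_add hx (cspan_neg hy)

lemma cspan_sum {b : ℕ → B} {k : ℕ} {ι : Type*} (s : Finset ι) (f : ι → B)
    (h : ∀ i ∈ s, CSpan b k (f i)) : CSpan b k (∑ i ∈ s, f i) :=
  Finset.sum_induction f _ (fun _ _ hx hy => cspan_add hx hy) (cspan_zero _ _) h

end Aux

/-- key char-p divisibility for the substitution `Xⱼ ↦ Xⱼᵖ + p·Yⱼ`. -/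
lemma dvd_key {p : ℕ} (hp : p.Prime) {k : ℕ} (F : MvPolynomial (Fin k) ℤ) :
    C (p : ℤ) ∣ bind₁ (fun j : Fin k => X (Fin.castSucc j) ^ p + C (p : ℤ) * X j.succ) F
      - (rename (Fin.castSucc (n := k)) F) ^ p := by
  haveI := Fact.mk hp
  rw [C_dvd_iff_zmod, RingHom.map_sub, sub_eq_zero, map_bind₁, RingHom.map_pow, map_rename]
  have h0 : (Int.castRingHom (ZMod p)) (p : ℤ) = 0 := by
    simp
  simp only [map_add, map_mul, map_pow, map_X, map_C, h0, MvPolynomial.C_0, zero_mul, add_zero]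
  rw [← expand_zmod (p := p) (rename Fin.castSucc (map (Int.castRingHom (ZMod p)) F)),
    show (expand p : MvPolynomial (Fin (k+1)) (ZMod p) →ₐ[ZMod p] _)
        (rename Fin.castSucc (map (Int.castRingHom (ZMod p)) F))
      = bind₁ (fun i : Fin (k+1) => X i ^ p)
          (rename Fin.castSucc (map (Int.castRingHom (ZMod p)) F)) from rfl,
    bind₁_rename]
  rfl

/-- universal polynomial `P_k` with `(X₀ᵖ + p X₁)^(p^k) - X₀^(p^(k+1)) = p^(k+1)·P_k`. -/
lemma exists_P (p : ℕ) (hp : p.Prime) (k : ℕ) :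
    ∃ P : MvPolynomial (Fin 2) ℤ, Centered P ∧
      ((X 0 : MvPolynomial (Fin 2) ℤ) ^ p + C (p : ℤ) * X 1) ^ p ^ k - (X 0 ^ p) ^ p ^ k
        = C ((p : ℤ) ^ (k + 1)) * P := by
  have h : ((p : ℕ) : MvPolynomial (Fin 2) ℤ) ∣
      ((X 0 : MvPolynomial (Fin 2) ℤ) ^ p + C (p : ℤ) * X 1) - X 0 ^ p := by
    rw [show ((X 0 : MvPolynomial (Fin 2) ℤ) ^ p + C (p : ℤ) * X 1) - X 0 ^ p
        = C (p : ℤ) * X 1 by ring, C_eq_coe_nat]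
    exact dvd_mul_right _ _
  obtain ⟨P, hP⟩ := dvd_sub_pow_of_dvd_sub h k
  have hcast : ((p : ℕ) : MvPolynomial (Fin 2) ℤ) ^ (k + 1) = C ((p : ℤ) ^ (k + 1)) := by
    rw [map_pow, C_eq_coe_nat]
  rw [hcast] at hP
  refine ⟨P, ?_, hP⟩
  have h0 := congrArg (eval (fun _ => (0 : ℤ))) hP
  have hpk : p ^ k ≠ 0 := pow_ne_zero _ hp.ne_zero
  simp only [map_sub, map_pow, map_add, map_mul, eval_X, eval_C, mul_zero, add_zero,
    zero_pow hp.ne_zero, zero_pow hpk, sub_self] at h0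
  have hpz : ((p : ℤ) ^ (k + 1)) ≠ 0 := pow_ne_zero _ (Int.natCast_ne_zero.mpr hp.ne_zero)
  unfold Centered
  rcases mul_eq_zero.mp h0.symm with h | h
  · exact absurd h hpz
  · exact h

/-- The Frobenius lift associated to a `p`-derivation is a ring homomorphism. -/
noncomputable def pFrob (p : ℕ) {B : Type*} [CommRing B] (Cp : MvPolynomial (Fin 2) ℤ)
    (hCp : (p : MvPolynomial (Fin 2) ℤ) * Cp = X 0 ^ p + X 1 ^ p - (X 0 + X 1) ^ p)
    (δ : B → B) (hδ : IsPDeriv p Cp δ) : B →+* B :=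
  RingHom.mk'
    { toFun := fun x => x ^ p + (p : B) * δ x
      map_one' := by simp [hδ.1]
      map_mul' := fun x y => by
        simp only [hδ.2.2]
        ring }
    (fun x y => by
      have key : (p : B) * MvPolynomial.aeval ![x, y] Cp
          = x ^ p + y ^ p - (x + y) ^ p := by
        have h := congrArg (MvPolynomial.aeval ![x, y]) hCp
        simp only [map_mul, map_natCast, map_add, map_sub, map_pow, aeval_X,
          Matrix.cons_val_zero, Matrix.cons_val_one, Matrix.head_cons] at h
        exact h
      show (x + y) ^ p + (p : B) * δ (x + y) = (x ^ p + (p : B) * δ x) + (y ^ p + (p : B) * δ y)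
      rw [hδ.2.1]
      linear_combination key)

lemma cspan_delta {B : Type*} [CommRing B] {p : ℕ} (hp : p.Prime)
    (hpB : (p : B) ∈ nonZeroDivisors B)
    (δ : B → B) (Φ : B →+* B) (hΦ : ∀ x, Φ x = x ^ p + (p : B) * δ x)
    (b : ℕ → B) (hb : ∀ i, δ (b i) = b (i + 1)) {k : ℕ} {x : B}
    (h : CSpan b k x) : CSpan b (k + 1) (δ x) := by
  obtain ⟨F, hF, rfl⟩ := h
  obtain ⟨c, hc⟩ := dvd_key hp F
  rw [sub_eq_iff_eq_add] at hc
  refine ⟨c, ?_, ?_⟩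
  · -- centered
    have h0 := congrArg (eval (fun _ => (0 : ℤ))) hc
    rw [eval_bind₁'] at h0
    simp only [map_add, map_mul, map_pow, eval_X, eval_C, mul_zero, add_zero,
      zero_pow hp.ne_zero, eval_rename] at h0
    unfold Centered at hF ⊢
    rw [show ((fun _ => (0:ℤ)) ∘ Fin.castSucc (n := k)) = fun _ => (0:ℤ) from rfl, hF] at h0
    simp only [zero_pow hp.ne_zero, zero_add, add_zero] at h0
    rcases mul_eq_zero.mp h0.symm with h | h
    · exact absurd h (by exact_mod_cast hp.ne_zero)
    · exact h
  · have hval := congrArg (MvPolynomial.aeval (fun i : Fin (k + 1) => b (i : ℕ))) hc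
    rw [aeval_bind₁, map_add, map_pow, aeval_rename, map_mul, aeval_C] at hval
    have e1 : (fun j : Fin k =>
        MvPolynomial.aeval (fun i : Fin (k + 1) => b (i : ℕ))
          (X (Fin.castSucc j) ^ p + C (p : ℤ) * X j.succ))
        = fun j : Fin k => Φ (b (j : ℕ)) := by
      funext j
      simp only [map_add, map_pow, map_mul, aeval_X, aeval_C, Fin.coe_castSucc, Fin.val_succ]
      rw [← hb j, hΦ (b (j : ℕ)), map_natCast]
    have e2 : ((fun i : Fin (k + 1) => b (i : ℕ)) ∘ Fin.castSucc)
        = fun i : Fin k => b (i : ℕ) := by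
      funext j
      simp
    rw [e1, e2] at hval
    have e3 : (MvPolynomial.aeval (fun j : Fin k => Φ (b (j : ℕ))) F)
        = Φ (MvPolynomial.aeval (fun i : Fin k => b (i : ℕ)) F) :=
      (comp_aeval_apply (fun i : Fin k => b (i : ℕ)) Φ.toIntAlgHom F).symm
    rw [e3, hΦ (MvPolynomial.aeval (fun i : Fin k => b (i : ℕ)) F)] at hval
    have hcancel : (p : B) * δ (MvPolynomial.aeval (fun i : Fin k => b (i : ℕ)) F)
        = (p : B) * MvPolynomial.aeval (fun i : Fin (k + 1) => b (i : ℕ)) c := by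
      have : algebraMap ℤ B ((p : ℤ)) = (p : B) := by push_cast; rfl
      rw [this] at hval
      linear_combination hval
    exact (mul_cancel_left_mem_nonZeroDivisors hpB).mp hcancel

/-- For Witt-coordinate families, `t_m - δ^m(t_0)` is a centered polynomial in
`t_0, …, t_{m-1}`, and also a centered polynomial in `t_0, δ(t_0), …, δ^{m-1}(t_0)`. -/
theorem t_sub_iterate_deriv_centered
    (p : ℕ) (hp : p.Prime) {B : Type*} [CommRing B]
    (hpB : (p : B) ∈ nonZeroDivisors B)
    (Cp : MvPolynomial (Fin 2) ℤ)
    (hCp : (p : MvPolynomial (Fin 2) ℤ) * Cp =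
      X 0 ^ p + X 1 ^ p - (X 0 + X 1) ^ p)
    (δ : B → B) (hδ : IsPDeriv p Cp δ)
    (φ : B → B) (hφ : ∀ x : B, φ x = x ^ p + (p : B) * δ x)
    (n : ℕ) (hn : 1 ≤ n) (t : ℕ → B)
    (ht : ∀ j ≤ n, φ^[j] (t 0) =
      ∑ i ∈ Finset.range (j + 1), (p : B) ^ i * t i ^ p ^ (j - i)) :
    ∀ m, 1 ≤ m → m ≤ n →
      (∃ F : MvPolynomial (Fin m) ℤ, Centered F ∧
        t m - δ^[m] (t 0) = MvPolynomial.aeval (fun i : Fin m => t i) F) ∧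
      (∃ G : MvPolynomial (Fin m) ℤ, Centered G ∧
        t m - δ^[m] (t 0) =
          MvPolynomial.aeval (fun i : Fin m => δ^[(i : ℕ)] (t 0)) G) := by
  classical
  set a : ℕ → B := fun i => δ^[i] (t 0) with ha
  have hab : ∀ i, δ (a i) = a (i + 1) := fun i =>
    (Function.iterate_succ_apply' δ i (t 0)).symm
  set Φ : B →+* B := pFrob p Cp hCp δ hδ with hΦdef
  have hΦ : ∀ x, Φ x = x ^ p + (p : B) * δ x := fun x => rfl
  have hφΦ : ∀ x, φ x = Φ x := fun x => by rw [hφ x, hΦ x]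
  have hCpc : Centered Cp := by
    have h0 := congrArg (eval (fun _ => (0 : ℤ))) hCp
    simp only [map_mul, map_natCast, map_add, map_sub, map_pow, eval_X,
      zero_pow hp.ne_zero, add_zero, zero_add, sub_self, sub_zero] at h0
    unfold Centered
    rcases mul_eq_zero.mp h0 with h | h
    · exact absurd h (by exact_mod_cast hp.ne_zero)
    · exact h
  choose P hPc hPe using fun k => exists_P p hp k
  have hP0 : P 0 = X 1 := by
    have h := hPe 0
    rw [pow_zero, pow_one, pow_one] at h
    have h' : C ((p : ℤ) ^ 1) * (X 1 : MvPolynomial (Fin 2) ℤ) = C ((p : ℤ) ^ 1) * P 0 := by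
      rw [← h, pow_one]
      ring
    have hC : (C ((p : ℤ) ^ 1) : MvPolynomial (Fin 2) ℤ) ≠ 0 := by
      simp only [pow_one, ne_eq, MvPolynomial.C_eq_zero]
      exact_mod_cast hp.ne_zero
    exact (mul_left_cancel₀ hC h').symm
  have key : ∀ m, m ≤ n → CSpan a m (t m - a m) ∧ CSpan t m (t m - a m) := by
    intro m
    induction m using Nat.strong_induction_on with
    | _ m IH =>
      intro hmn
      cases m with
      | zero =>
        have h0 : t 0 - a 0 = 0 := by
          simp [ha]
        rw [h0]
        exact ⟨cspan_zero _ _, cspan_zero _ _⟩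
      | succ i =>
        have hδt : ∀ j, j ≤ i → CSpan a (j + 1) (δ (t j) - a (j + 1)) := by
          intro j hj
          have hjm : j < i + 1 := Nat.lt_succ_of_le hj
          obtain ⟨hAj, _⟩ := IH j hjm (le_trans (le_of_lt hjm) hmn)
          have e0 : t j = a j + (t j - a j) := by ring
          have e : δ (t j) = δ (a j) + δ (t j - a j)
              + MvPolynomial.aeval ![a j, t j - a j] Cp := by
            calc δ (t j) = δ (a j + (t j - a j)) := by rw [← e0]
              _ = _ := hδ.2.1 _ _
          have e' : δ (t j) - a (j + 1) = δ (t j - a j)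
              + MvPolynomial.aeval ![a j, t j - a j] Cp := by
            rw [e, hab j]
            ring
          rw [e']
          apply cspan_add
          · exact cspan_delta hp hpB δ Φ hΦ a hab hAj
          · refine cspan_comp a Cp hCpc ![a j, t j - a j] ?_
            intro jj
            fin_cases jj
            · simpa using cspan_var a (Nat.lt_succ_self j)
            · simpa using cspan_mono a (Nat.le_succ j) hAj
        -- the basic sum identity
        have e2 : (∑ j ∈ Finset.range (i + 1 + 1), (p : B) ^ j * t j ^ p ^ (i + 1 - j))
            = ∑ j ∈ Finset.range (i + 1), (p : B) ^ j * Φ (t j) ^ p ^ (i - j) := by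
          rw [← ht (i + 1) hmn, Function.iterate_succ_apply', hφΦ,
            ht i (Nat.le_of_succ_le hmn), map_sum]
          exact Finset.sum_congr rfl fun j _ => by rw [map_mul, map_pow, map_pow, map_natCast]
        rw [Finset.sum_range_succ, Nat.sub_self, pow_zero, pow_one] at e2
        have hterm : ∀ j ∈ Finset.range (i + 1),
            (p : B) ^ j * Φ (t j) ^ p ^ (i - j) - (p : B) ^ j * t j ^ p ^ (i + 1 - j)
              = (p : B) ^ (i + 1) * MvPolynomial.aeval ![t j, δ (t j)] (P (i - j)) := by
          intro j hj
          rw [Finset.mem_range, Nat.lt_succ_iff] at hj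
          have hv := congrArg (MvPolynomial.aeval ![t j, δ (t j)]) (hPe (i - j))
          simp only [map_sub, map_pow, map_add, map_mul, aeval_X, aeval_C,
            Matrix.cons_val_zero, Matrix.cons_val_one, Matrix.head_cons,
            map_natCast] at hv
          have h1 : Φ (t j) = t j ^ p + (p : B) * δ (t j) := hΦ _
          have h2 : t j ^ p ^ (i + 1 - j) = (t j ^ p) ^ p ^ (i - j) := by
            rw [← pow_mul]
            congr 1
            rw [show i + 1 - j = (i - j) + 1 from by omega, pow_succ']
          calc (p : B) ^ j * Φ (t j) ^ p ^ (i - j) - (p : B) ^ j * t j ^ p ^ (i + 1 - j)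
              = (p : B) ^ j * ((t j ^ p + (p : B) * δ (t j)) ^ p ^ (i - j)
                  - (t j ^ p) ^ p ^ (i - j)) := by rw [h1, h2]; ring
            _ = (p : B) ^ j * ((p : B) ^ (i - j + 1)
                  * MvPolynomial.aeval ![t j, δ (t j)] (P (i - j))) := by rw [hv]
            _ = (p : B) ^ (i + 1) * MvPolynomial.aeval ![t j, δ (t j)] (P (i - j)) := by
                rw [← mul_assoc, ← pow_add, show j + (i - j + 1) = i + 1 from by omega]
        have hsum : (p : B) ^ (i + 1) * t (i + 1)
            = (p : B) ^ (i + 1) * ∑ j ∈ Finset.range (i + 1),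
                MvPolynomial.aeval ![t j, δ (t j)] (P (i - j)) := by
          calc (p : B) ^ (i + 1) * t (i + 1)
              = (∑ j ∈ Finset.range (i + 1), (p : B) ^ j * Φ (t j) ^ p ^ (i - j))
                - ∑ j ∈ Finset.range (i + 1), (p : B) ^ j * t j ^ p ^ (i + 1 - j) := by
                linear_combination e2
            _ = ∑ j ∈ Finset.range (i + 1), ((p : B) ^ j * Φ (t j) ^ p ^ (i - j)
                - (p : B) ^ j * t j ^ p ^ (i + 1 - j)) := (Finset.sum_sub_distrib ..).symm
            _ = ∑ j ∈ Finset.range (i + 1), (p : B) ^ (i + 1)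
                * MvPolynomial.aeval ![t j, δ (t j)] (P (i - j)) :=
                Finset.sum_congr rfl hterm
            _ = _ := (Finset.mul_sum _ _ _).symm
        have ht1 : t (i + 1) = ∑ j ∈ Finset.range (i + 1),
            MvPolynomial.aeval ![t j, δ (t j)] (P (i - j)) :=
          (mul_cancel_left_mem_nonZeroDivisors (pow_mem hpB (i + 1))).mp hsum
        have hwi : MvPolynomial.aeval ![t i, δ (t i)] (P (i - i)) = δ (t i) := by
          rw [Nat.sub_self, hP0]
          simp
        have hAside : CSpan a (i + 1) (t (i + 1) - a (i + 1)) := by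
          rw [ht1, Finset.sum_range_succ, hwi,
            show (∑ j ∈ Finset.range i, MvPolynomial.aeval ![t j, δ (t j)] (P (i - j)))
                + δ (t i) - a (i + 1)
              = (∑ j ∈ Finset.range i, MvPolynomial.aeval ![t j, δ (t j)] (P (i - j)))
                + (δ (t i) - a (i + 1)) from by ring]
          apply cspan_add
          · apply cspan_sum
            intro j hj
            rw [Finset.mem_range] at hj
            refine cspan_comp a (P (i - j)) (hPc _) ![t j, δ (t j)] ?_
            intro jj
            fin_cases jj
            · simp only [Matrix.cons_val_zero]
              rw [show t j = a j + (t j - a j) from by ring]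
              exact cspan_add (cspan_var a (by omega))
                (cspan_mono a (by omega) (IH j (by omega) (by omega)).1)
            · simp only [Matrix.cons_val_one, Matrix.head_cons]
              rw [show δ (t j) = a (j + 1) + (δ (t j) - a (j + 1)) from by ring]
              exact cspan_add (cspan_var a (by omega))
                (cspan_mono a (by omega) (hδt j (by omega)))
          · exact hδt i le_rfl
        refine ⟨hAside, ?_⟩
        obtain ⟨F, hF, hFe⟩ := hAside
        rw [hFe]
        refine cspan_comp t F hF _ ?_
        intro jj
        have hjj : (jj : ℕ) < i + 1 := jj.isLt
        rw [show a (jj : ℕ) = t (jj : ℕ) - (t (jj : ℕ) - a (jj : ℕ)) from by ring]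
        exact cspan_sub (cspan_var t hjj)
          (cspan_mono t (le_of_lt hjj) (IH (jj : ℕ) hjj (by omega)).2)
  intro m _ hmn
  obtain ⟨hA, hT⟩ := key m hmn
  obtain ⟨G, hG, hGe⟩ := hA
  obtain ⟨F, hF, hFe⟩ := hT
  exact ⟨⟨F, hF, hFe⟩, ⟨G, hG, hGe⟩⟩
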